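/- Let k : (0,∞) → [0,∞) be locally integrable with Laplace transform 𝒦(λ) finite and positive for every λ > 0, and suppose there is ℓ > 0 with λ𝒦(λ) → ℓ as λ → 0⁺ and λ𝒦(λ) ≥ ℓ for all λ > 0, and that for some ϱ ≥ 0 the function L(x) := x^{-ϱ} 𝒦(1/x) is slowly varying at infinity. Let G be a subordination density associated with 𝒦, and let u : (0,∞) → [0,∞) be measurable with ‖u‖_{1,ℓ} := ∫_0^∞ e^{-ℓτ} u(τ) dτ finite and nonzero. Then (1/t) ∫_0^t u^E(s) ds ∼ (‖u‖_{1,ℓ} / Γ(ϱ+1)) · t^{-1} 𝒦(1/t) as t → ∞. -/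

import Mathlib

open MeasureTheory Real Filter Set
open Topology

section Karamata
variable {f : ℝ → ℝ} {A : ℝ}

lemma kara_int (hfm : Measurable f) (hf0 : ∀ t ∈ Ioi (0:ℝ), 0 ≤ f t)
    (hfi : ∀ l : ℝ, 0 < l → IntegrableOn (fun t => Real.exp (-l*t) * f t) (Ioi 0))
    {l : ℝ} (hl : 0 < l) (p : Polynomial ℝ) :
    IntegrableOn (fun t => Real.exp (-l*t) * p.eval (Real.exp (-l*t)) * f t) (Ioi 0) := by
  obtain ⟨C, hC⟩ := isCompact_Icc.exists_bound_of_continuousOn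
    (s := Icc (0:ℝ) 1) (p.continuous.continuousOn (s := Icc 0 1)) (f := fun x => p.eval x)
  refine Integrable.mono' (((hfi l hl).const_mul C)) ?_ ?_
  · exact ((((Real.continuous_exp.comp (continuous_const.mul continuous_id)).measurable).mul
      ((p.continuous.measurable).comp
        (Real.continuous_exp.comp (continuous_const.mul continuous_id)).measurable)).mul
      hfm).aestronglyMeasurable
  · refine (ae_restrict_iff' measurableSet_Ioi).2 (ae_of_all _ fun t ht => ?_)
    have ht0 : (0:ℝ) < t := ht
    have hx0 : (0:ℝ) ≤ Real.exp (-l*t) := (Real.exp_pos _).le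
    have hx1 : Real.exp (-l*t) ≤ 1 := by
      apply Real.exp_le_one_iff.2
      nlinarith
    have hb := hC _ (mem_Icc.2 ⟨hx0, hx1⟩)
    have hf := hf0 t ht
    rw [norm_mul, norm_mul, Real.norm_eq_abs, Real.norm_eq_abs, Real.norm_eq_abs,
      abs_of_nonneg hx0, abs_of_nonneg hf]
    have hCpos : 0 ≤ C := le_trans (abs_nonneg _) hb
    calc Real.exp (-l*t) * |p.eval (Real.exp (-l*t))| * f t
        ≤ Real.exp (-l*t) * C * f t := by
          apply mul_le_mul_of_nonneg_right _ hf
          exact mul_le_mul_of_nonneg_left (by simpa [Real.norm_eq_abs] using hb) hx0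
      _ = C * (Real.exp (-l*t) * f t) := by ring

lemma kara_mul_tendsto (c : ℝ) (hc : 0 < c) :
    Tendsto (fun l : ℝ => c * l) (𝓝[>] 0) (𝓝[>] 0) := by
  rw [tendsto_nhdsWithin_iff]
  constructor
  · have : Tendsto (fun l : ℝ => c * l) (𝓝 0) (𝓝 (c * 0)) := tendsto_const_nhds.mul tendsto_id
    simpa using this.mono_left nhdsWithin_le_nhds
  · exact eventually_nhdsWithin_of_forall fun x hx => mul_pos hc hx

lemma kara_poly (hfm : Measurable f) (hf0 : ∀ t ∈ Ioi (0:ℝ), 0 ≤ f t)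
    (hfi : ∀ l : ℝ, 0 < l → IntegrableOn (fun t => Real.exp (-l*t) * f t) (Ioi 0))
    (hA : Tendsto (fun l => l * ∫ t in Ioi (0:ℝ), Real.exp (-l*t) * f t) (𝓝[>] 0) (𝓝 A))
    (p : Polynomial ℝ) :
    Tendsto (fun l => l * ∫ t in Ioi (0:ℝ), Real.exp (-l*t) * p.eval (Real.exp (-l*t)) * f t)
      (𝓝[>] 0) (𝓝 (A * ∫ x in (0:ℝ)..1, p.eval x)) := by
  induction p using Polynomial.induction_on' with
  | monomial n a =>
    have hn : ((n:ℝ)+1) ≠ 0 := by positivity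
    have H := (hA.comp (kara_mul_tendsto ((n:ℝ)+1) (by positivity))).const_mul (a/((n:ℝ)+1))
    have hval : (a/((n:ℝ)+1)) * A = A * ∫ x in (0:ℝ)..1, (Polynomial.monomial n a).eval x := by
      have : ∀ x : ℝ, (Polynomial.monomial n a).eval x = a * x ^ n := by
        intro x; simp [Polynomial.eval_monomial]
      rw [intervalIntegral.integral_congr (fun x _ => this x)]
      rw [intervalIntegral.integral_const_mul, integral_pow]
      simp
      ring
    rw [hval] at H
    refine H.congr fun l => ?_
    simp only [Function.comp]
    have key : (fun t : ℝ => Real.exp (-l*t) * (Polynomial.monomial n a).eval (Real.exp (-l*t))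
        * f t) = fun t => a * (Real.exp (-(((n:ℝ)+1)*l)*t) * f t) := by
      funext t
      have e1 : Real.exp (-(((n:ℝ)+1)*l)*t) = Real.exp (-l*t) ^ (n+1) := by
        rw [← Real.exp_nat_mul]; congr 1; push_cast; ring
      rw [Polynomial.eval_monomial, e1, pow_succ]; ring
    rw [key, MeasureTheory.integral_const_mul]
    field_simp
  | add p q hp hq =>
    have H := hp.add hq
    rw [← mul_add, ← intervalIntegral.integral_add
      (p.continuous.intervalIntegrable _ _) (q.continuous.intervalIntegrable _ _)] at H
    have H2 : Tendsto (fun l => l * ∫ t in Ioi (0:ℝ),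
        Real.exp (-l*t) * (p+q).eval (Real.exp (-l*t)) * f t)
        (𝓝[>] 0) (𝓝 (A * ∫ x in (0:ℝ)..1, (p.eval x + q.eval x))) := by
      refine H.congr' ?_
      filter_upwards [self_mem_nhdsWithin] with l hl
      have hl' : (0:ℝ) < l := hl
      rw [← mul_add, ← integral_add (kara_int hfm hf0 hfi hl' p) (kara_int hfm hf0 hfi hl' q)]
      congr 1
      apply setIntegral_congr_fun measurableSet_Ioi
      intro t ht
      simp [Polynomial.eval_add]; ring
    have : (∫ x in (0:ℝ)..1, (p.eval x + q.eval x)) = ∫ x in (0:ℝ)..1, (p+q).eval x := by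
      apply intervalIntegral.integral_congr; intro x _; simp [Polynomial.eval_add]
    rw [this] at H2
    exact H2

noncomputable def kramp (r δ x : ℝ) : ℝ := min 1 (max 0 ((x - r)/δ))
noncomputable def kpsi (x : ℝ) : ℝ := (max x (Real.exp (-1)))⁻¹
noncomputable def kbump (r δ x : ℝ) : ℝ := kramp r δ x * kpsi x

lemma kexp_pos : (0:ℝ) < Real.exp (-1) := Real.exp_pos _
lemma kexp_lt_half : Real.exp (-1) < 1/2 := by
  have h2 : (2:ℝ) < Real.exp 1 := lt_trans (by norm_num) Real.exp_one_gt_d9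
  rw [Real.exp_neg]
  rw [inv_lt_comm₀ (Real.exp_pos 1) (by norm_num)] at *
  · linarith [h2]

lemma kramp_nonneg (r δ x : ℝ) : 0 ≤ kramp r δ x :=
  le_min zero_le_one (le_max_left _ _)
lemma kramp_le_one (r δ x : ℝ) : kramp r δ x ≤ 1 := min_le_left _ _
lemma kramp_eq_zero {r δ x : ℝ} (h : x ≤ r) (hδ : 0 < δ) : kramp r δ x = 0 := by
  unfold kramp
  rw [max_eq_left, min_eq_right]
  · exact zero_le_one
  · exact div_nonpos_of_nonpos_of_nonneg (by linarith) hδ.le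
lemma kramp_eq_one {r δ x : ℝ} (hδ : 0 < δ) (h : r + δ ≤ x) : kramp r δ x = 1 := by
  unfold kramp
  have h1 : (1:ℝ) ≤ (x - r)/δ := (le_div_iff₀ hδ).2 (by linarith)
  rw [max_eq_right (by linarith), min_eq_left h1]
lemma kpsi_pos (x : ℝ) : 0 < kpsi x :=
  inv_pos.2 (lt_of_lt_of_le kexp_pos (le_max_right _ _))
lemma kpsi_le (x : ℝ) : kpsi x ≤ Real.exp 1 := by
  unfold kpsi
  rw [Real.exp_neg] at *
  calc (max x (Real.exp 1)⁻¹)⁻¹ ≤ ((Real.exp 1)⁻¹)⁻¹ := by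
        apply inv_anti₀ (inv_pos.2 (Real.exp_pos 1)) (le_max_right _ _)
    _ = Real.exp 1 := inv_inv _
lemma kpsi_eq {x : ℝ} (h : Real.exp (-1) ≤ x) : kpsi x = x⁻¹ := by
  unfold kpsi; rw [max_eq_left h]
lemma kbump_cont (r δ : ℝ) : Continuous (kbump r δ) := by
  apply Continuous.mul
  · exact continuous_const.min (continuous_const.max ((continuous_id.sub continuous_const).div_const _))
  · exact Continuous.inv₀ (continuous_id.max continuous_const)
      (fun x => ne_of_gt (lt_of_lt_of_le kexp_pos (le_max_right _ _)))
lemma kbump_nonneg (r δ x : ℝ) : 0 ≤ kbump r δ x :=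
  mul_nonneg (kramp_nonneg _ _ _) (kpsi_pos _).le
lemma kbump_le (r δ x : ℝ) : kbump r δ x ≤ Real.exp 1 := by
  calc kramp r δ x * kpsi x ≤ 1 * Real.exp 1 :=
    mul_le_mul (kramp_le_one _ _ _) (kpsi_le _) (kpsi_pos _).le zero_le_one
  _ = Real.exp 1 := one_mul _

lemma kbump_upper_eq_one {δ x : ℝ} (hδ : 0 < δ) (hax : Real.exp (-1) ≤ x) :
    x * kbump (Real.exp (-1) - δ) δ x = 1 := by
  have hx0 : 0 < x := lt_of_lt_of_le kexp_pos hax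
  rw [kbump, kramp_eq_one hδ (by linarith), kpsi_eq hax, one_mul, mul_inv_cancel₀ hx0.ne']

lemma kbump_lower_le {δ x : ℝ} (hδ : 0 < δ) (hx0 : 0 < x) :
    x * kbump (Real.exp (-1)) δ x ≤ if Real.exp (-1) ≤ x then 1 else 0 := by
  by_cases hax : Real.exp (-1) ≤ x
  · rw [if_pos hax, kbump, kpsi_eq hax]
    calc x * (kramp (Real.exp (-1)) δ x * x⁻¹) = kramp (Real.exp (-1)) δ x := by
          field_simp
      _ ≤ 1 := kramp_le_one _ _ _
  · rw [if_neg hax, kbump, kramp_eq_zero (le_of_not_ge hax) hδ, zero_mul, mul_zero]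

lemma kintegral_upper {δ : ℝ} (hδ : 0 < δ) (hδ2 : δ ≤ Real.exp (-1) / 2) :
    ∫ x in (0:ℝ)..1, kbump (Real.exp (-1) - δ) δ x ≤ 1 + Real.exp 1 * δ := by
  set a := Real.exp (-1) with ha_def
  have ha : 0 < a := kexp_pos
  have ha1 : a < 1/2 := kexp_lt_half
  have h0 : (0:ℝ) ≤ a - δ := by linarith
  have hii : ∀ y z : ℝ, IntervalIntegrable (kbump (a - δ) δ) volume y z :=
    fun y z => (kbump_cont _ _).intervalIntegrable y z
  have e1 : (∫ x in (0:ℝ)..(a-δ), kbump (a-δ) δ x) + (∫ x in (a-δ)..a, kbump (a-δ) δ x)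
      = ∫ x in (0:ℝ)..a, kbump (a-δ) δ x :=
    intervalIntegral.integral_add_adjacent_intervals (hii _ _) (hii _ _)
  have e2 : (∫ x in (0:ℝ)..a, kbump (a-δ) δ x) + (∫ x in a..1, kbump (a-δ) δ x)
      = ∫ x in (0:ℝ)..1, kbump (a-δ) δ x :=
    intervalIntegral.integral_add_adjacent_intervals (hii _ _) (hii _ _)
  have p1 : (∫ x in (0:ℝ)..(a-δ), kbump (a-δ) δ x) = 0 := by
    rw [intervalIntegral.integral_congr (g := fun _ => (0:ℝ)), intervalIntegral.integral_const,
      smul_zero]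
    intro x hx
    rw [uIcc_of_le h0] at hx
    exact by rw [kbump, kramp_eq_zero hx.2 hδ, zero_mul]
  have p2 : (∫ x in (a-δ)..a, kbump (a-δ) δ x) ≤ Real.exp 1 * δ := by
    calc (∫ x in (a-δ)..a, kbump (a-δ) δ x) ≤ ∫ _x in (a-δ)..a, Real.exp 1 := by
          apply intervalIntegral.integral_mono_on (by linarith) (hii _ _)
            (intervalIntegrable_const)
          intro x _; exact kbump_le _ _ _
      _ = Real.exp 1 * δ := by rw [intervalIntegral.integral_const, smul_eq_mul]; ring
  have p3 : (∫ x in a..1, kbump (a-δ) δ x) = 1 := by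
    rw [intervalIntegral.integral_congr (g := fun x => x⁻¹)]
    · rw [integral_inv_of_pos ha one_pos, one_div, Real.log_inv, ha_def, Real.log_exp]; ring
    · intro x hx
      rw [uIcc_of_le (by linarith)] at hx
      rw [kbump, kramp_eq_one hδ (by linarith [hx.1]), kpsi_eq hx.1, one_mul]
  linarith [e1, e2]

lemma kintegral_lower {δ : ℝ} (hδ : 0 < δ) (hδ2 : δ ≤ Real.exp (-1) / 2) :
    1 - Real.exp 1 * δ ≤ ∫ x in (0:ℝ)..1, kbump (Real.exp (-1)) δ x := by
  set a := Real.exp (-1) with ha_def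
  have ha : 0 < a := kexp_pos
  have ha1 : a < 1/2 := kexp_lt_half
  have hae : a⁻¹ = Real.exp 1 := by rw [ha_def, Real.exp_neg, inv_inv]
  have h1 : a + δ ≤ 1 := by linarith
  have hii : ∀ y z : ℝ, IntervalIntegrable (kbump a δ) volume y z :=
    fun y z => (kbump_cont _ _).intervalIntegrable y z
  have e1 : (∫ x in (0:ℝ)..a, kbump a δ x) + (∫ x in a..(a+δ), kbump a δ x)
      = ∫ x in (0:ℝ)..(a+δ), kbump a δ x :=
    intervalIntegral.integral_add_adjacent_intervals (hii _ _) (hii _ _)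
  have e2 : (∫ x in (0:ℝ)..(a+δ), kbump a δ x) + (∫ x in (a+δ)..1, kbump a δ x)
      = ∫ x in (0:ℝ)..1, kbump a δ x :=
    intervalIntegral.integral_add_adjacent_intervals (hii _ _) (hii _ _)
  have p1 : (∫ x in (0:ℝ)..a, kbump a δ x) = 0 := by
    rw [intervalIntegral.integral_congr (g := fun _ => (0:ℝ)), intervalIntegral.integral_const,
      smul_zero]
    intro x hx
    rw [uIcc_of_le ha.le] at hx
    exact by rw [kbump, kramp_eq_zero hx.2 hδ, zero_mul]
  have p2 : (0:ℝ) ≤ ∫ x in a..(a+δ), kbump a δ x :=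
    intervalIntegral.integral_nonneg (by linarith) (fun x _ => kbump_nonneg _ _ _)
  have p3 : 1 - Real.exp 1 * δ ≤ ∫ x in (a+δ)..1, kbump a δ x := by
    have : (∫ x in (a+δ)..1, kbump a δ x) = Real.log (1 / (a+δ)) := by
      rw [intervalIntegral.integral_congr (g := fun x => x⁻¹)]
      · exact integral_inv_of_pos (by linarith) one_pos
      · intro x hx
        rw [uIcc_of_le h1] at hx
        rw [kbump, kramp_eq_one hδ hx.1, kpsi_eq (by linarith [hx.1]), one_mul]
    rw [this, one_div, Real.log_inv]
    have hlog : Real.log (a+δ) ≤ -1 + Real.exp 1 * δ := by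
      have h2 : Real.log ((a+δ)/a) ≤ (a+δ)/a - 1 :=
        Real.log_le_sub_one_of_pos (by positivity)
      rw [Real.log_div (by positivity) ha.ne'] at h2
      have h3 : Real.log a = -1 := by rw [ha_def, Real.log_exp]
      have h4 : (a+δ)/a - 1 = δ * a⁻¹ := by field_simp; ring
      rw [h4, hae] at h2
      linarith
    linarith
  linarith [e1, e2]

lemma kara_ind_int (hfm : Measurable f) (hf0 : ∀ t ∈ Ioi (0:ℝ), 0 ≤ f t)
    (hfi : ∀ l : ℝ, 0 < l → IntegrableOn (fun t => Real.exp (-l*t) * f t) (Ioi 0))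
    {l : ℝ} (hl : 0 < l) :
    IntegrableOn ((Iic l⁻¹).indicator f) (Ioi 0) := by
  refine Integrable.mono' ((hfi l hl).const_mul (Real.exp 1))
    ((hfm.indicator measurableSet_Iic).aestronglyMeasurable) ?_
  refine (ae_restrict_iff' measurableSet_Ioi).2 (ae_of_all _ fun t ht => ?_)
  have ht0 : (0:ℝ) < t := ht
  by_cases h : t ∈ Iic l⁻¹
  · rw [indicator_of_mem h, Real.norm_eq_abs, abs_of_nonneg (hf0 t ht)]
    have hlt : l * t ≤ 1 := by
      rw [mem_Iic] at h
      calc l * t ≤ l * l⁻¹ := by apply mul_le_mul_of_nonneg_left h hl.le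
        _ = 1 := mul_inv_cancel₀ hl.ne'
    have : (1:ℝ) ≤ Real.exp 1 * Real.exp (-l*t) := by
      rw [← Real.exp_add]
      apply Real.one_le_exp
      linarith
    calc f t = 1 * f t := (one_mul _).symm
      _ ≤ (Real.exp 1 * Real.exp (-l*t)) * f t :=
          mul_le_mul_of_nonneg_right this (hf0 t ht)
      _ = Real.exp 1 * (Real.exp (-l*t) * f t) := by ring
  · rw [indicator_of_notMem h, norm_zero]
    exact mul_nonneg (Real.exp_pos 1).le (mul_nonneg (Real.exp_pos _).le (hf0 t ht))

set_option maxHeartbeats 2000000 in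
theorem karamata_density (hfm : Measurable f) (hf0 : ∀ t ∈ Ioi (0:ℝ), 0 ≤ f t)
    (hfi : ∀ l : ℝ, 0 < l → IntegrableOn (fun t => Real.exp (-l*t) * f t) (Ioi 0))
    (hA : Tendsto (fun l => l * ∫ t in Ioi (0:ℝ), Real.exp (-l*t) * f t) (𝓝[>] 0) (𝓝 A)) :
    Tendsto (fun l => l * ∫ t in Ioi (0:ℝ), (Iic l⁻¹).indicator f t) (𝓝[>] 0) (𝓝 A) := by
  have ha : (0:ℝ) < Real.exp (-1) := kexp_pos
  have hexp1 : (0:ℝ) < Real.exp 1 := Real.exp_pos 1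
  have hA0 : 0 ≤ A := by
    refine ge_of_tendsto hA ?_
    filter_upwards [self_mem_nhdsWithin] with l hl
    have hl' : (0:ℝ) < l := hl
    have : 0 ≤ ∫ t in Ioi (0:ℝ), Real.exp (-l*t) * f t :=
      setIntegral_nonneg measurableSet_Ioi fun t ht =>
        mul_nonneg (Real.exp_pos _).le (hf0 t ht)
    positivity
  rw [tendsto_order]
  constructor
  · -- lower: ∀ b < A, eventually b < M l
    intro b hb
    set ε' := A - b with hε'
    have hε'0 : 0 < ε' := by simp [hε']; linarith
    have hA1 : (0:ℝ) < A + 1 := by linarith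
    have hexpne : Real.exp 1 ≠ 0 := hexp1.ne'
    have hA1ne : A + 1 ≠ 0 := hA1.ne'
    set δ := min (Real.exp (-1) / 2) (ε'/(4 * Real.exp 1 * (A+1))) with hδdef
    have hδ : 0 < δ := lt_min (by positivity) (div_pos hε'0 (by nlinarith))
    have hδ2 : δ ≤ Real.exp (-1) / 2 := min_le_left _ _
    have hδ3 : δ ≤ ε'/(4 * Real.exp 1 * (A+1)) := min_le_right _ _
    set ε₁ := ε'/(8*(A+1)) with hε₁def
    have hε₁ : 0 < ε₁ := div_pos hε'0 (by nlinarith)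
    obtain ⟨p, hp⟩ := exists_polynomial_near_of_continuousOn 0 1 (kbump (Real.exp (-1)) δ)
      (kbump_cont _ _).continuousOn ε₁ hε₁
    set Q := p - Polynomial.C ε₁ with hQdef
    have hQle : ∀ x ∈ Icc (0:ℝ) 1, Q.eval x ≤ kbump (Real.exp (-1)) δ x := by
      intro x hx
      have := hp x hx
      rw [abs_lt] at this
      simp only [hQdef, Polynomial.eval_sub, Polynomial.eval_C]
      linarith [this.2]
    have hQge : ∀ x ∈ Icc (0:ℝ) 1, kbump (Real.exp (-1)) δ x - 2*ε₁ ≤ Q.eval x := by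
      intro x hx
      have := hp x hx
      rw [abs_lt] at this
      simp only [hQdef, Polynomial.eval_sub, Polynomial.eval_C]
      linarith [this.1]
    have T := kara_poly hfm hf0 hfi hA Q
    have hIQ : 1 - Real.exp 1 * δ - 2*ε₁ ≤ ∫ x in (0:ℝ)..1, Q.eval x := by
      have h1 : (∫ x in (0:ℝ)..1, (kbump (Real.exp (-1)) δ x - 2*ε₁))
          ≤ ∫ x in (0:ℝ)..1, Q.eval x := by
        apply intervalIntegral.integral_mono_on zero_le_one
          (((kbump_cont _ _).sub continuous_const).intervalIntegrable _ _)
          (Q.continuous.intervalIntegrable _ _)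
        intro x hx; exact hQge x hx
      have h2 : (∫ x in (0:ℝ)..1, (kbump (Real.exp (-1)) δ x - 2*ε₁))
          = (∫ x in (0:ℝ)..1, kbump (Real.exp (-1)) δ x) - 2*ε₁ := by
        rw [intervalIntegral.integral_sub ((kbump_cont _ _).intervalIntegrable _ _)
          (intervalIntegrable_const), intervalIntegral.integral_const, smul_eq_mul]
        ring
      have h3 := kintegral_lower hδ hδ2
      linarith
    have hbQ : b < A * ∫ x in (0:ℝ)..1, Q.eval x := by
      have key : A * (Real.exp 1 * δ + 2*ε₁) ≤ ε'/2 := by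
        have k1 : Real.exp 1 * δ ≤ ε'/(4*(A+1)) := by
          calc Real.exp 1 * δ ≤ Real.exp 1 * (ε'/(4 * Real.exp 1 * (A+1))) :=
                mul_le_mul_of_nonneg_left hδ3 hexp1.le
            _ = ε'/(4*(A+1)) := by field_simp
        have k2 : 2*ε₁ = ε'/(4*(A+1)) := by rw [hε₁def]; field_simp; ring
        have k3 : A * (Real.exp 1 * δ + 2*ε₁) ≤ A * (ε'/(2*(A+1))) := by
          apply mul_le_mul_of_nonneg_left _ hA0
          have : ε'/(4*(A+1)) + ε'/(4*(A+1)) = ε'/(2*(A+1)) := by field_simp; ring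
          linarith [k1, k2]
        have k4 : A * (ε'/(2*(A+1))) ≤ ε'/2 := by
          have h6 : A * ε' ≤ (A+1) * ε' := by nlinarith
          calc A * (ε'/(2*(A+1))) = (A * ε') / (2*(A+1)) := by ring
            _ ≤ ((A+1) * ε') / (2*(A+1)) := by
                exact (div_le_div_iff_of_pos_right (by nlinarith)).2 h6
            _ = ε'/2 := by field_simp
        linarith
      have h5 : A * (1 - Real.exp 1 * δ - 2*ε₁) ≤ A * ∫ x in (0:ℝ)..1, Q.eval x :=
        mul_le_mul_of_nonneg_left hIQ hA0
      nlinarith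
    have hev : ∀ᶠ l in 𝓝[>] (0:ℝ),
        (l * ∫ t in Ioi (0:ℝ), Real.exp (-l*t) * Q.eval (Real.exp (-l*t)) * f t)
        ≤ l * ∫ t in Ioi (0:ℝ), (Iic l⁻¹).indicator f t := by
      filter_upwards [self_mem_nhdsWithin] with l hl
      have hl' : (0:ℝ) < l := hl
      apply mul_le_mul_of_nonneg_left _ hl'.le
      apply setIntegral_mono_on (kara_int hfm hf0 hfi hl' Q)
        (kara_ind_int hfm hf0 hfi hl') measurableSet_Ioi
      intro t ht
      have ht0 : (0:ℝ) < t := ht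
      set x := Real.exp (-l*t) with hxdef
      have hx0 : 0 < x := Real.exp_pos _
      have hx1 : x ≤ 1 := Real.exp_le_one_iff.2 (by nlinarith)
      have hQx := hQle x ⟨hx0.le, hx1⟩
      by_cases h : t ∈ Iic l⁻¹
      · rw [indicator_of_mem h]
        have hax : Real.exp (-1) ≤ x := by
          rw [hxdef]
          apply Real.exp_le_exp.2
          rw [mem_Iic] at h
          nlinarith [mul_le_mul_of_nonneg_left h hl'.le, mul_inv_cancel₀ hl'.ne']
        have hb1 : x * Q.eval x ≤ 1 := by
          calc x * Q.eval x ≤ x * kbump (Real.exp (-1)) δ x :=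
              mul_le_mul_of_nonneg_left hQx hx0.le
            _ ≤ 1 := by simpa [if_pos hax] using kbump_lower_le hδ hx0 (x := x)
        calc x * Q.eval x * f t ≤ 1 * f t :=
            mul_le_mul_of_nonneg_right hb1 (hf0 t ht)
          _ = f t := one_mul _
      · rw [indicator_of_notMem h]
        have hax : x < Real.exp (-1) := by
          rw [hxdef]
          apply Real.exp_lt_exp.2
          rw [mem_Iic, not_le] at h
          nlinarith [mul_lt_mul_of_pos_left h hl', mul_inv_cancel₀ hl'.ne']
        have : Q.eval x ≤ 0 := by
          calc Q.eval x ≤ kbump (Real.exp (-1)) δ x := hQx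
            _ = 0 := by rw [kbump, kramp_eq_zero hax.le hδ, zero_mul]
        exact mul_nonpos_of_nonpos_of_nonneg (mul_nonpos_of_nonneg_of_nonpos hx0.le this)
          (hf0 t ht)
    filter_upwards [hev, T.eventually_const_lt hbQ] with l h1 h2
    exact lt_of_lt_of_le h2 h1
  · -- upper: ∀ b > A, eventually M l < b
    intro b hb
    set ε' := b - A with hε'
    have hε'0 : 0 < ε' := by simp [hε']; linarith
    have hA1 : (0:ℝ) < A + 1 := by linarith
    have hexpne : Real.exp 1 ≠ 0 := hexp1.ne'
    have hA1ne : A + 1 ≠ 0 := hA1.ne'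
    set δ := min (Real.exp (-1) / 2) (ε'/(4 * Real.exp 1 * (A+1))) with hδdef
    have hδ : 0 < δ := lt_min (by positivity) (div_pos hε'0 (by nlinarith))
    have hδ2 : δ ≤ Real.exp (-1) / 2 := min_le_left _ _
    have hδ3 : δ ≤ ε'/(4 * Real.exp 1 * (A+1)) := min_le_right _ _
    set ε₁ := ε'/(8*(A+1)) with hε₁def
    have hε₁ : 0 < ε₁ := div_pos hε'0 (by nlinarith)
    obtain ⟨p, hp⟩ := exists_polynomial_near_of_continuousOn 0 1
      (kbump (Real.exp (-1) - δ) δ) (kbump_cont _ _).continuousOn ε₁ hε₁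
    set P := p + Polynomial.C ε₁ with hPdef
    have hPge : ∀ x ∈ Icc (0:ℝ) 1, kbump (Real.exp (-1) - δ) δ x ≤ P.eval x := by
      intro x hx
      have := hp x hx
      rw [abs_lt] at this
      simp only [hPdef, Polynomial.eval_add, Polynomial.eval_C]
      linarith [this.1]
    have hPle : ∀ x ∈ Icc (0:ℝ) 1, P.eval x ≤ kbump (Real.exp (-1) - δ) δ x + 2*ε₁ := by
      intro x hx
      have := hp x hx
      rw [abs_lt] at this
      simp only [hPdef, Polynomial.eval_add, Polynomial.eval_C]
      linarith [this.2]
    have T := kara_poly hfm hf0 hfi hA P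
    have hIP : (∫ x in (0:ℝ)..1, P.eval x) ≤ 1 + Real.exp 1 * δ + 2*ε₁ := by
      have h1 : (∫ x in (0:ℝ)..1, P.eval x)
          ≤ ∫ x in (0:ℝ)..1, (kbump (Real.exp (-1) - δ) δ x + 2*ε₁) := by
        apply intervalIntegral.integral_mono_on zero_le_one
          (P.continuous.intervalIntegrable _ _)
          (((kbump_cont _ _).add continuous_const).intervalIntegrable _ _)
        intro x hx; exact hPle x hx
      have h2 : (∫ x in (0:ℝ)..1, (kbump (Real.exp (-1) - δ) δ x + 2*ε₁))
          = (∫ x in (0:ℝ)..1, kbump (Real.exp (-1) - δ) δ x) + 2*ε₁ := by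
        rw [intervalIntegral.integral_add ((kbump_cont _ _).intervalIntegrable _ _)
          (intervalIntegrable_const), intervalIntegral.integral_const, smul_eq_mul]
        ring
      have h3 := kintegral_upper hδ hδ2
      linarith
    have hbP : A * (∫ x in (0:ℝ)..1, P.eval x) < b := by
      have key : A * (Real.exp 1 * δ + 2*ε₁) ≤ ε'/2 := by
        have k1 : Real.exp 1 * δ ≤ ε'/(4*(A+1)) := by
          calc Real.exp 1 * δ ≤ Real.exp 1 * (ε'/(4 * Real.exp 1 * (A+1))) :=
                mul_le_mul_of_nonneg_left hδ3 hexp1.le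
            _ = ε'/(4*(A+1)) := by field_simp
        have k2 : 2*ε₁ = ε'/(4*(A+1)) := by rw [hε₁def]; field_simp; ring
        have k3 : A * (Real.exp 1 * δ + 2*ε₁) ≤ A * (ε'/(2*(A+1))) := by
          apply mul_le_mul_of_nonneg_left _ hA0
          have : ε'/(4*(A+1)) + ε'/(4*(A+1)) = ε'/(2*(A+1)) := by field_simp; ring
          linarith [k1, k2]
        have k4 : A * (ε'/(2*(A+1))) ≤ ε'/2 := by
          have h6 : A * ε' ≤ (A+1) * ε' := by nlinarith
          calc A * (ε'/(2*(A+1))) = (A * ε') / (2*(A+1)) := by ring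
            _ ≤ ((A+1) * ε') / (2*(A+1)) := by
                exact (div_le_div_iff_of_pos_right (by nlinarith)).2 h6
            _ = ε'/2 := by field_simp
        linarith
      have h5 : A * (∫ x in (0:ℝ)..1, P.eval x) ≤ A * (1 + Real.exp 1 * δ + 2*ε₁) :=
        mul_le_mul_of_nonneg_left hIP hA0
      nlinarith
    have hev : ∀ᶠ l in 𝓝[>] (0:ℝ),
        (l * ∫ t in Ioi (0:ℝ), (Iic l⁻¹).indicator f t)
        ≤ l * ∫ t in Ioi (0:ℝ), Real.exp (-l*t) * P.eval (Real.exp (-l*t)) * f t := by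
      filter_upwards [self_mem_nhdsWithin] with l hl
      have hl' : (0:ℝ) < l := hl
      apply mul_le_mul_of_nonneg_left _ hl'.le
      apply setIntegral_mono_on (kara_ind_int hfm hf0 hfi hl')
        (kara_int hfm hf0 hfi hl' P) measurableSet_Ioi
      intro t ht
      have ht0 : (0:ℝ) < t := ht
      set x := Real.exp (-l*t) with hxdef
      have hx0 : 0 < x := Real.exp_pos _
      have hx1 : x ≤ 1 := Real.exp_le_one_iff.2 (by nlinarith)
      have hPx := hPge x ⟨hx0.le, hx1⟩
      have hRHS : x * kbump (Real.exp (-1) - δ) δ x * f t ≤ x * P.eval x * f t := by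
        apply mul_le_mul_of_nonneg_right _ (hf0 t ht)
        exact mul_le_mul_of_nonneg_left hPx hx0.le
      by_cases h : t ∈ Iic l⁻¹
      · rw [indicator_of_mem h]
        have hax : Real.exp (-1) ≤ x := by
          rw [hxdef]
          apply Real.exp_le_exp.2
          rw [mem_Iic] at h
          nlinarith [mul_le_mul_of_nonneg_left h hl'.le, mul_inv_cancel₀ hl'.ne']
        have : x * kbump (Real.exp (-1) - δ) δ x * f t = f t := by
          rw [kbump_upper_eq_one hδ hax, one_mul]
        linarith [hRHS, this]
      · rw [indicator_of_notMem h]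
        have : 0 ≤ x * kbump (Real.exp (-1) - δ) δ x * f t :=
          mul_nonneg (mul_nonneg hx0.le (kbump_nonneg _ _ _)) (hf0 t ht)
        linarith [hRHS, this]
    filter_upwards [hev, T.eventually_lt_const hbP] with l h1 h2
    exact lt_of_le_of_lt h1 h2

end Karamata


set_option maxHeartbeats 2000000 in

/-- Remark (ii) after the main theorem: when `λ𝒦(λ) → ℓ > 0` as `λ → 0⁺`
(and `λ𝒦(λ) ≥ ℓ`), the integrability of `u` may be dropped, provided the `L¹`
norm is replaced by the weighted norm `‖u‖_{1,ℓ} = ∫_0^∞ e^{-ℓτ} u(τ) dτ`. -/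
theorem cesaro_mean_subordination_asymptotics_weighted
    (k K : ℝ → ℝ) (ϱ : ℝ) (hϱ : 0 ≤ ϱ) (ℓ : ℝ) (hℓ : 0 < ℓ)
    (hk_nonneg : ∀ t ∈ Ioi (0:ℝ), 0 ≤ k t)
    (hk_loc : LocallyIntegrableOn k (Ioi 0))
    (hK_int : ∀ l : ℝ, 0 < l → IntegrableOn (fun t => Real.exp (-l * t) * k t) (Ioi 0))
    (hK_def : ∀ l : ℝ, 0 < l → K l = ∫ t in Ioi (0:ℝ), Real.exp (-l * t) * k t)
    (hK_pos : ∀ l : ℝ, 0 < l → 0 < K l)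
    (hlim : Tendsto (fun l => l * K l) (nhdsWithin 0 (Ioi 0)) (nhds ℓ))
    (hge : ∀ l : ℝ, 0 < l → ℓ ≤ l * K l)
    (hSV : ∀ c : ℝ, 0 < c →
      Tendsto (fun x => ((c * x) ^ (-ϱ) * K (1 / (c * x))) / (x ^ (-ϱ) * K (1 / x)))
        atTop (nhds 1))
    (G : ℝ → ℝ → ℝ)
    (hG_meas : Measurable (Function.uncurry G))
    (hG_nonneg : ∀ t ∈ Ioi (0:ℝ), ∀ τ ∈ Ioi (0:ℝ), 0 ≤ G t τ)
    (hG : ∀ l : ℝ, 0 < l → ∀ τ : ℝ, 0 < τ →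
      ∫ t in Ioi (0:ℝ), Real.exp (-l * t) * G t τ = K l * Real.exp (-(τ * l * K l)))
    (u : ℝ → ℝ)
    (hu_meas : Measurable u)
    (hu_nonneg : ∀ τ ∈ Ioi (0:ℝ), 0 ≤ u τ)
    (hu_int : IntegrableOn (fun τ => Real.exp (-ℓ * τ) * u τ) (Ioi 0))
    (hu_ne : (∫ τ in Ioi (0:ℝ), Real.exp (-ℓ * τ) * u τ) ≠ 0) :
    Tendsto (fun t =>
      ((1 / t) * ∫ s in (0:ℝ)..t, ∫ τ in Ioi (0:ℝ), u τ * G s τ) /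
        (((∫ τ in Ioi (0:ℝ), Real.exp (-ℓ * τ) * u τ) / Real.Gamma (ϱ + 1)) *
          (t⁻¹ * K t⁻¹)))
      atTop (nhds 1) := by
  have hinv : Tendsto (fun t : ℝ => t⁻¹) atTop (𝓝[>] (0:ℝ)) := tendsto_inv_atTop_nhdsGT_zero
  set J0 := ∫ τ in Ioi (0:ℝ), Real.exp (-ℓ * τ) * u τ with hJ0def
  set f : ℝ → ℝ := fun s => ∫ τ in Ioi (0:ℝ), u τ * G s τ with hfdef
  -- measurability of f
  have hWm : Measurable (fun p : ℝ × ℝ => u p.2 * G p.1 p.2) :=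
    (hu_meas.comp measurable_snd).mul hG_meas
  have hfm : Measurable f :=
    (hWm.stronglyMeasurable.integral_prod_right').measurable
  have hf0 : ∀ s ∈ Ioi (0:ℝ), 0 ≤ f s := fun s hs =>
    setIntegral_nonneg measurableSet_Ioi fun τ hτ =>
      mul_nonneg (hu_nonneg τ hτ) (hG_nonneg s hs τ hτ)
  -- integrability of the G-slices
  have hGint : ∀ l : ℝ, 0 < l → ∀ τ : ℝ, 0 < τ →
      IntegrableOn (fun s => Real.exp (-l * s) * G s τ) (Ioi 0) := by
    intro l hl τ hτ
    by_contra hcon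
    have h0 := MeasureTheory.integral_undef hcon
    have h2 := hG l hl τ hτ
    rw [h0] at h2
    exact absurd h2.symm (mul_pos (hK_pos l hl) (Real.exp_pos _)).ne'
  -- product integrability, in (τ, s) order
  have hprod : ∀ l : ℝ, 0 < l →
      Integrable (fun p : ℝ × ℝ => Real.exp (-l * p.2) * (u p.1 * G p.2 p.1))
        ((volume.restrict (Ioi 0)).prod (volume.restrict (Ioi 0))) := by
    intro l hl
    have hmeas : AEStronglyMeasurable
        (fun p : ℝ × ℝ => Real.exp (-l * p.2) * (u p.1 * G p.2 p.1))
        ((volume.restrict (Ioi 0)).prod (volume.restrict (Ioi 0))) := by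
      apply Measurable.aestronglyMeasurable
      exact (Real.measurable_exp.comp (measurable_snd.const_mul (-l))).mul
        ((hu_meas.comp measurable_fst).mul
          (hG_meas.comp (measurable_snd.prodMk measurable_fst)))
    rw [MeasureTheory.integrable_prod_iff hmeas]
    constructor
    · refine (ae_restrict_iff' measurableSet_Ioi).2 (ae_of_all _ fun τ hτ => ?_)
      have hτ0 : (0:ℝ) < τ := hτ
      have heq : (fun s => Real.exp (-l * s) * (u τ * G s τ))
          = fun s => u τ * (Real.exp (-l * s) * G s τ) := by funext s; ring
      rw [heq]
      exact (hGint l hl τ hτ0).const_mul (u τ)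
    · refine Integrable.mono' (hu_int.const_mul (K l))
        (hmeas.norm.integral_prod_right') ?_
      refine (ae_restrict_iff' measurableSet_Ioi).2 (ae_of_all _ fun τ hτ => ?_)
      have hτ0 : (0:ℝ) < τ := hτ
      have hnn : ∀ s ∈ Ioi (0:ℝ), 0 ≤ Real.exp (-l * s) * (u τ * G s τ) := fun s hs =>
        mul_nonneg (Real.exp_pos _).le
          (mul_nonneg (hu_nonneg τ hτ) (hG_nonneg s hs τ hτ))
      have heq : (∫ s in Ioi (0:ℝ), ‖Real.exp (-l * s) * (u τ * G s τ)‖)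
          = u τ * (K l * Real.exp (-(τ * l * K l))) := by
        rw [show (∫ s in Ioi (0:ℝ), ‖Real.exp (-l * s) * (u τ * G s τ)‖)
            = ∫ s in Ioi (0:ℝ), u τ * (Real.exp (-l * s) * G s τ) from
          setIntegral_congr_fun measurableSet_Ioi fun s hs => by
            rw [Real.norm_of_nonneg (hnn s hs)]; ring]
        rw [MeasureTheory.integral_const_mul, hG l hl τ hτ0]
      have hnrm : ‖∫ s in Ioi (0:ℝ), ‖Real.exp (-l * s) * (u τ * G s τ)‖‖
          = ∫ s in Ioi (0:ℝ), ‖Real.exp (-l * s) * (u τ * G s τ)‖ := by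
        apply Real.norm_of_nonneg
        exact setIntegral_nonneg measurableSet_Ioi fun s _ => norm_nonneg _
      rw [hnrm, heq]
      have hexp : Real.exp (-(τ * l * K l)) ≤ Real.exp (-ℓ * τ) := by
        apply Real.exp_le_exp.2
        have := mul_le_mul_of_nonneg_left (hge l hl) hτ0.le
        nlinarith
      calc u τ * (K l * Real.exp (-(τ * l * K l)))
          ≤ u τ * (K l * Real.exp (-ℓ * τ)) := by
            apply mul_le_mul_of_nonneg_left _ (hu_nonneg τ hτ)
            exact mul_le_mul_of_nonneg_left hexp (hK_pos l hl).le
        _ = K l * (Real.exp (-ℓ * τ) * u τ) := by ring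
  -- the weighted integral J
  set Jl : ℝ → ℝ := fun l => ∫ τ in Ioi (0:ℝ), Real.exp (-(τ * (l * K l))) * u τ with hJldef
  have hω : ∀ l : ℝ, 0 < l →
      (∫ s in Ioi (0:ℝ), Real.exp (-l * s) * f s) = K l * Jl l := by
    intro l hl
    have hswap := MeasureTheory.integral_integral_swap
      (f := fun τ s => Real.exp (-l * s) * (u τ * G s τ))
      (μ := volume.restrict (Ioi 0)) (ν := volume.restrict (Ioi 0)) (hprod l hl)
    calc (∫ s in Ioi (0:ℝ), Real.exp (-l * s) * f s)
        = ∫ s in Ioi (0:ℝ), ∫ τ in Ioi (0:ℝ), Real.exp (-l * s) * (u τ * G s τ) := by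
          refine integral_congr_ae (ae_of_all _ fun s => ?_)
          rw [hfdef]
          exact (MeasureTheory.integral_const_mul _ _).symm
      _ = ∫ τ in Ioi (0:ℝ), ∫ s in Ioi (0:ℝ), Real.exp (-l * s) * (u τ * G s τ) :=
          hswap.symm
      _ = ∫ τ in Ioi (0:ℝ), (Real.exp (-(τ * (l * K l))) * u τ) * K l := by
          apply setIntegral_congr_fun measurableSet_Ioi
          intro τ hτ
          have hτ0 : (0:ℝ) < τ := hτ
          dsimp only
          have e1 : (fun s => Real.exp (-l * s) * (u τ * G s τ))
              = fun s => u τ * (Real.exp (-l * s) * G s τ) := by funext s; ring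
          rw [e1, MeasureTheory.integral_const_mul, hG l hl τ hτ0,
            show τ * l * K l = τ * (l * K l) by ring]
          ring
      _ = (∫ τ in Ioi (0:ℝ), Real.exp (-(τ * (l * K l))) * u τ) * K l :=
          MeasureTheory.integral_mul_const _ _
      _ = K l * Jl l := by rw [hJldef]; ring
  have hfint : ∀ l : ℝ, 0 < l →
      IntegrableOn (fun s => Real.exp (-l * s) * f s) (Ioi 0) := by
    intro l hl
    have h1 := ((hprod l hl).swap).integral_prod_left
    refine h1.congr (ae_of_all _ fun s => ?_)
    simp only [Function.comp, Prod.swap]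
    rw [hfdef]
    exact (MeasureTheory.integral_const_mul _ _)
  -- limit of J
  have hJ : Tendsto Jl (𝓝[>] (0:ℝ)) (𝓝 J0) := by
    rw [hJldef, hJ0def]
    apply tendsto_integral_filter_of_dominated_convergence
      (bound := fun τ => Real.exp (-ℓ * τ) * u τ)
    · apply Eventually.of_forall
      intro l
      have hm : Measurable fun τ : ℝ => Real.exp (-(τ * (l * K l))) * u τ :=
        (Real.measurable_exp.comp ((measurable_id.mul_const (l * K l)).neg)).mul hu_meas
      exact hm.aestronglyMeasurable
    · filter_upwards [self_mem_nhdsWithin] with l hl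
      refine (ae_restrict_iff' measurableSet_Ioi).2 (ae_of_all _ fun τ hτ => ?_)
      have hτ0 : (0:ℝ) < τ := hτ
      have hl' : (0:ℝ) < l := hl
      rw [Real.norm_eq_abs, abs_mul, abs_of_nonneg (Real.exp_pos _).le,
        abs_of_nonneg (hu_nonneg τ hτ)]
      apply mul_le_mul_of_nonneg_right _ (hu_nonneg τ hτ)
      apply Real.exp_le_exp.2
      have := mul_le_mul_of_nonneg_left (hge l hl') hτ0.le
      nlinarith
    · exact hu_int
    · refine (ae_restrict_iff' measurableSet_Ioi).2 (ae_of_all _ fun τ hτ => ?_)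
      have h1 : Tendsto (fun l : ℝ => Real.exp (-(τ * (l * K l))) * u τ)
          (𝓝[>] 0) (𝓝 (Real.exp (-(τ * ℓ)) * u τ)) := by
        exact (((Real.continuous_exp.tendsto _).comp
          ((hlim.const_mul τ).neg)).mul_const (u τ))
      rw [show -(τ * ℓ) = -ℓ * τ by ring] at h1
      exact h1
  -- Laplace transform asymptotics
  have hA' : Tendsto (fun l => l * ∫ t in Ioi (0:ℝ), Real.exp (-l*t) * f t)
      (𝓝[>] (0:ℝ)) (𝓝 (ℓ * J0)) := by
    refine (hlim.mul hJ).congr' ?_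
    filter_upwards [self_mem_nhdsWithin] with l hl
    have hl' : (0:ℝ) < l := hl
    rw [show (fun t => Real.exp (-l*t) * f t) = fun s => Real.exp (-l*s) * f s from rfl,
      hω l hl']
    ring
  have hM := karamata_density hfm hf0 hfint hA'
  -- numerator limit
  have hN : Tendsto (fun t => (1 / t) * ∫ s in (0:ℝ)..t, f s) atTop (𝓝 (ℓ * J0)) := by
    have h3 := hM.comp hinv
    refine h3.congr' ?_
    filter_upwards [eventually_ge_atTop (1:ℝ)] with t ht
    have ht0 : (0:ℝ) < t := by linarith
    simp only [Function.comp, inv_inv]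
    rw [one_div]
    congr 1
    rw [MeasureTheory.setIntegral_indicator measurableSet_Iic, Set.Ioi_inter_Iic,
      intervalIntegral.integral_of_le ht0.le]
  -- ϱ = 1
  have hq : Tendsto (fun t : ℝ => t⁻¹ * K t⁻¹) atTop (𝓝 ℓ) := hlim.comp hinv
  have hϱ1 : ϱ = 1 := by
    have hq2 : Tendsto (fun x : ℝ => (2*x)⁻¹ * K (2*x)⁻¹) atTop (𝓝 ℓ) :=
      hq.comp (tendsto_id.const_mul_atTop two_pos)
    have hratio : Tendsto (fun x : ℝ => (2:ℝ)^((1:ℝ)-ϱ) *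
        (((2*x)⁻¹ * K (2*x)⁻¹) / (x⁻¹ * K x⁻¹))) atTop
        (𝓝 ((2:ℝ)^((1:ℝ)-ϱ) * (ℓ/ℓ))) :=
      (hq2.div hq hℓ.ne').const_mul _
    have heq : ∀ᶠ x in atTop, ((2*x) ^ (-ϱ) * K (1/(2*x))) / (x ^ (-ϱ) * K (1/x))
        = (2:ℝ)^((1:ℝ)-ϱ) * (((2*x)⁻¹ * K (2*x)⁻¹)/(x⁻¹ * K x⁻¹)) := by
      filter_upwards [eventually_gt_atTop (0:ℝ)] with x hx
      have h2x : (0:ℝ) < 2*x := by linarith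
      have e1 : (2*x) ^ (-ϱ) * K (1/(2*x))
          = ((2:ℝ)^((1:ℝ)-ϱ) * x^((1:ℝ)-ϱ)) * ((2*x)⁻¹ * K (2*x)⁻¹) := by
        rw [one_div]
        have h5 : (2*x) ^ (-ϱ) = ((2:ℝ)^((1:ℝ)-ϱ) * x^((1:ℝ)-ϱ)) * (2*x)⁻¹ := by
          rw [← Real.mul_rpow (by norm_num) hx.le,
            show ((1:ℝ)-ϱ) = 1 + (-ϱ) by ring, Real.rpow_add h2x, Real.rpow_one]
          field_simp
        rw [h5]; ring
      have e2 : x ^ (-ϱ) * K (1/x) = x^((1:ℝ)-ϱ) * (x⁻¹ * K x⁻¹) := by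
        rw [one_div]
        have h5 : x ^ (-ϱ) = x^((1:ℝ)-ϱ) * x⁻¹ := by
          rw [show ((1:ℝ)-ϱ) = 1 + (-ϱ) by ring, Real.rpow_add hx, Real.rpow_one]
          field_simp
        rw [h5]; ring
      rw [e1, e2]
      have hxp : x^((1:ℝ)-ϱ) ≠ 0 := (Real.rpow_pos_of_pos hx _).ne'
      have hq1 : x⁻¹ * K x⁻¹ ≠ 0 :=
        (lt_of_lt_of_le hℓ (hge x⁻¹ (inv_pos.2 hx))).ne'
      rw [show (2:ℝ)^((1:ℝ)-ϱ) * x^((1:ℝ)-ϱ) * ((2*x)⁻¹ * K (2*x)⁻¹)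
          = x^((1:ℝ)-ϱ) * ((2:ℝ)^((1:ℝ)-ϱ) * ((2*x)⁻¹ * K (2*x)⁻¹)) by ring]
      rw [mul_div_mul_left _ _ hxp, mul_div_assoc]
    have heq' : (fun x : ℝ => (2:ℝ)^((1:ℝ)-ϱ) * (((2*x)⁻¹ * K (2*x)⁻¹)/(x⁻¹ * K x⁻¹)))
        =ᶠ[atTop] fun x => ((2*x) ^ (-ϱ) * K (1/(2*x))) / (x ^ (-ϱ) * K (1/x)) := by
      filter_upwards [heq] with x hx
      exact hx.symm
    have h6 : (2:ℝ)^((1:ℝ)-ϱ) * (ℓ/ℓ) = 1 :=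
      tendsto_nhds_unique (hratio.congr' heq') (hSV 2 two_pos)
    rw [div_self hℓ.ne', mul_one] at h6
    have h7 := congrArg Real.log h6
    rw [Real.log_rpow (by norm_num), Real.log_one] at h7
    have hlog2 : Real.log 2 ≠ 0 := (Real.log_pos (by norm_num)).ne'
    have := mul_eq_zero.1 h7
    rcases this with h | h
    · linarith
    · exact absurd h hlog2
  have hΓ : Real.Gamma (ϱ + 1) = 1 := by
    rw [hϱ1, Real.Gamma_add_one one_ne_zero, Real.Gamma_one, mul_one]
  -- denominator limit
  have hD : Tendsto (fun t : ℝ => (J0 / Real.Gamma (ϱ + 1)) * (t⁻¹ * K t⁻¹)) atTop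
      (𝓝 ((J0 / Real.Gamma (ϱ + 1)) * ℓ)) := hq.const_mul _
  have hDne : (J0 / Real.Gamma (ϱ + 1)) * ℓ ≠ 0 := by
    rw [hΓ]
    simp only [div_one]
    exact mul_ne_zero hu_ne hℓ.ne'
  have hfinal := hN.div hD hDne
  have hval : (ℓ * J0) / ((J0 / Real.Gamma (ϱ + 1)) * ℓ) = 1 := by
    rw [hΓ]
    field_simp
  rw [hval] at hfinal
  exact hfinal
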